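/- For a q-ary input discrete channel W, the symmetric capacity (in nats, i.e. natural logarithm) satisfies I(W) ≤ log(q/2) + (log 2)·√(1 − Z(W)²). -/

import Mathlib

open Finset

/-- Symmetric capacity of a channel with uniform input, in nats. -/
noncomputable def symCap {X Y : Type*} [Fintype X] [Fintype Y] (W : X → Y → ℝ) : ℝ :=
  ∑ x, ∑ y, (Fintype.card X : ℝ)⁻¹ * W x y *
    Real.log (W x y / ((Fintype.card X : ℝ)⁻¹ * ∑ x', W x' y))

/-- Average Bhattacharyya parameter of a channel. -/
noncomputable def Zavg {X Y : Type*} [Fintype X] [Fintype Y] [DecidableEq X]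
    (W : X → Y → ℝ) : ℝ :=
  ((Fintype.card X : ℝ) * ((Fintype.card X : ℝ) - 1))⁻¹ *
    ∑ x, ∑ x' ∈ univ.filter (· ≠ x), ∑ y, Real.sqrt (W x y * W x' y)

section Aux

open Real

private noncomputable def rr (x : ℝ) : ℝ := Real.log (1+x) - Real.log (1-x) - 4*Real.log 2*x

private lemma hasDerivAt_rr {x : ℝ} (h1 : -1 < x) (h2 : x < 1) :
    HasDerivAt rr (1/(1+x) + 1/(1-x) - 4*Real.log 2) x := by
  have ha : (1:ℝ) + x ≠ 0 := by linarith
  have hb : (1:ℝ) - x ≠ 0 := by linarith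
  have d1 : HasDerivAt (fun y : ℝ => Real.log (1+y)) (1/(1+x)) x := by
    simpa using (((hasDerivAt_id x).const_add 1).log ha)
  have d2 : HasDerivAt (fun y : ℝ => Real.log (1-y)) (-(1/(1-x))) x := by
    have : HasDerivAt (fun y : ℝ => 1 - y) (-1) x := by
      simpa using ((hasDerivAt_id x).const_sub 1)
    simpa [neg_div] using this.log hb
  have d3 : HasDerivAt (fun y : ℝ => 4*Real.log 2*y) (4*Real.log 2) x := by
    simpa using (hasDerivAt_id x).const_mul (4*Real.log 2)
  have := (d1.sub d2).sub d3
  refine this.congr_deriv ?_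
  ring

private lemma rr_convex : ConvexOn ℝ (Set.Ico (0:ℝ) 1) rr := by
  have hD : Convex ℝ (Set.Ico (0:ℝ) 1) := convex_Ico 0 1
  have hint : interior (Set.Ico (0:ℝ) 1) = Set.Ioo 0 1 := interior_Ico
  have hmono : MonotoneOn (deriv rr) (interior (Set.Ico (0:ℝ) 1)) := by
    rw [hint]
    intro x hx y hy hxy
    rw [(hasDerivAt_rr (by linarith [hx.1]) hx.2).deriv,
        (hasDerivAt_rr (by linarith [hy.1]) hy.2).deriv]
    have h1 : (0:ℝ) < 1 + x := by linarith [hx.1]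
    have h2 : (0:ℝ) < 1 - x := by linarith [hx.2]
    have h3 : (0:ℝ) < 1 + y := by linarith [hy.1]
    have h4 : (0:ℝ) < 1 - y := by linarith [hy.2]
    have hx0 : 0 < x := hx.1
    have key : 1/(1+x) + 1/(1-x) ≤ 1/(1+y) + 1/(1-y) := by
      rw [div_add_div _ _ (ne_of_gt h1) (ne_of_gt h2),
          div_add_div _ _ (ne_of_gt h3) (ne_of_gt h4)]
      rw [div_le_div_iff₀ (by positivity) (by positivity)]
      nlinarith [mul_pos h1 h2, mul_pos h3 h4, hx0.le.trans hxy]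
    linarith
  have hcont : ContinuousOn rr (Set.Ico (0:ℝ) 1) := by
    unfold rr
    apply ContinuousOn.sub
    apply ContinuousOn.sub
    · exact (continuous_const.add continuous_id).continuousOn.log
        (fun x hx => by simp only [Set.mem_Ico] at hx; intro h; simp only [Pi.add_apply, id_eq] at h; linarith [hx.1])
    · exact (continuous_const.sub continuous_id).continuousOn.log
        (fun x hx => by simp only [Set.mem_Ico] at hx; intro h; simp only [Pi.sub_apply, id_eq] at h; linarith [hx.2])
    · exact (continuous_const.mul continuous_id).continuousOn
  have hdiff : DifferentiableOn ℝ rr (interior (Set.Ico (0:ℝ) 1)) := by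
    rw [hint]
    intro x hx
    exact (hasDerivAt_rr (by linarith [hx.1]) hx.2).differentiableAt.differentiableWithinAt
  exact hmono.convexOn_of_deriv hD hcont hdiff

private noncomputable def ph (x : ℝ) : ℝ :=
  2*Real.log 2*x^2 - ((1+x)*Real.log (1+x) + (1-x)*Real.log (1-x))

private lemma hasDerivAt_ph {x : ℝ} (h1 : -1 < x) (h2 : x < 1) :
    HasDerivAt ph (-(rr x)) x := by
  have ha : (1:ℝ) + x ≠ 0 := by linarith
  have hb : (1:ℝ) - x ≠ 0 := by linarith
  have d0 : HasDerivAt (fun y : ℝ => 2*Real.log 2*y^2) (4*Real.log 2*x) x := by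
    have := ((hasDerivAt_pow 2 x)).const_mul (2*Real.log 2)
    refine this.congr_deriv ?_
    ring
  have da : HasDerivAt (fun y : ℝ => 1+y) (1 : ℝ) x := by
    simpa using (hasDerivAt_id x).const_add 1
  have db : HasDerivAt (fun y : ℝ => 1-y) (-1 : ℝ) x := by
    simpa using (hasDerivAt_id x).const_sub 1
  have d1 : HasDerivAt (fun y : ℝ => (1+y)*Real.log (1+y))
      (1*Real.log (1+x) + (1+x)*(1/(1+x))) x := da.mul (da.log ha)
  have d2 : HasDerivAt (fun y : ℝ => (1-y)*Real.log (1-y))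
      ((-1)*Real.log (1-x) + (1-x)*(-1/(1-x))) x := db.mul (db.log hb)
  have := d0.sub (d1.add d2)
  refine this.congr_deriv ?_
  unfold rr
  field_simp
  ring

private lemma continuous_ph : Continuous ph := by
  unfold ph
  have h1 : Continuous fun x : ℝ => (1+x)*Real.log (1+x) :=
    (Real.continuous_mul_log).comp (continuous_const.add continuous_id)
  have h2 : Continuous fun x : ℝ => (1-x)*Real.log (1-x) :=
    (Real.continuous_mul_log).comp (continuous_const.sub continuous_id)
  exact ((continuous_const.mul (continuous_pow 2)).sub (h1.add h2))

private lemma rr_zero : rr 0 = 0 := by simp [rr]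

private lemma ph_zero : ph 0 = 0 := by simp [ph]

private lemma ph_one : ph 1 = 0 := by
  norm_num [ph, Real.log_zero]

/-- scaled convexity through the origin -/
private lemma rr_key {x y : ℝ} (hx0 : 0 ≤ x) (hxy : x ≤ y) (hy1 : y < 1) :
    y * rr x ≤ x * rr y := by
  rcases eq_or_lt_of_le (hx0.trans hxy) with h | hy0
  · -- y = 0, hence x = 0
    have hx : x = 0 := le_antisymm (hxy.trans_eq h.symm) hx0
    simp [hx, ← h, rr_zero]
  · have hmem0 : (0:ℝ) ∈ Set.Ico (0:ℝ) 1 := by constructor <;> norm_num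
    have hmemy : y ∈ Set.Ico (0:ℝ) 1 := ⟨hx0.trans hxy, hy1⟩
    have hab : (1 - x/y) + x/y = 1 := by ring
    have ha : 0 ≤ 1 - x/y := by
      have : x/y ≤ 1 := (div_le_one hy0).mpr hxy
      linarith
    have hb : 0 ≤ x/y := div_nonneg hx0 hy0.le
    have := rr_convex.2 hmem0 hmemy ha hb hab
    simp only [smul_eq_mul, mul_zero, zero_add, rr_zero] at this
    have hxx : x/y*y = x := div_mul_cancel₀ x hy0.ne'
    rw [hxx] at this
    calc y * rr x ≤ y * (x/y * rr y) := by
          apply mul_le_mul_of_nonneg_left _ hy0.le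
          simpa using this
      _ = x * rr y := by field_simp

private lemma ph_nonneg {x : ℝ} (h0 : 0 ≤ x) (h1 : x ≤ 1) : 0 ≤ ph x := by
  rcases eq_or_lt_of_le h0 with h | hx0
  · rw [← h, ph_zero]
  rcases eq_or_lt_of_le h1 with h | hx1
  · rw [h, ph_one]
  by_cases hrx : rr x ≤ 0
  · -- ph monotone on [0, x]
    have hmono : MonotoneOn ph (Set.Icc 0 x) := by
      apply monotoneOn_of_hasDerivWithinAt_nonneg (convex_Icc 0 x)
        continuous_ph.continuousOn (f' := fun z => -(rr z))
      · intro z hz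
        rw [interior_Icc] at hz
        exact (hasDerivAt_ph (by linarith [hz.1]) (by linarith [hz.2])).hasDerivWithinAt
      · intro z hz
        rw [interior_Icc] at hz
        have hkey := rr_key hz.1.le hz.2.le hx1
        have : rr z ≤ 0 := by
          nlinarith [hz.1, hkey, mul_nonpos_of_nonneg_of_nonpos hz.1.le hrx]
        linarith
    have := hmono (Set.left_mem_Icc.mpr h0) (Set.right_mem_Icc.mpr h0) h0
    rwa [ph_zero] at this
  · push_neg at hrx
    have hanti : AntitoneOn ph (Set.Icc x 1) := by
      apply antitoneOn_of_hasDerivWithinAt_nonpos (convex_Icc x 1)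
        continuous_ph.continuousOn (f' := fun z => -(rr z))
      · intro z hz
        rw [interior_Icc] at hz
        exact (hasDerivAt_ph (by linarith [hz.1]) hz.2).hasDerivWithinAt
      · intro z hz
        rw [interior_Icc] at hz
        have hkey := rr_key h0 hz.1.le hz.2
        have : 0 ≤ rr z := by nlinarith [mul_pos (hx0.trans hz.1) hrx]
        linarith
    have := hanti (Set.left_mem_Icc.mpr h1) (Set.right_mem_Icc.mpr h1) h1
    rwa [ph_one] at this

/-- The core scalar inequality. -/
private lemma core {x : ℝ} (h1 : -1 ≤ x) (h2 : x ≤ 1) :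
    (1+x)*Real.log (1+x) + (1-x)*Real.log (1-x) ≤ 2*Real.log 2*x^2 := by
  rcases le_or_gt 0 x with h | h
  · have := ph_nonneg h h2
    unfold ph at this; linarith
  · have := ph_nonneg (x := -x) (by linarith) (by linarith)
    unfold ph at this
    have e1 : 1 + -x = 1 - x := by ring
    have e2 : 1 - -x = 1 + x := by ring
    rw [e1, e2] at this
    nlinarith [this]

/-- Binary entropy pair inequality: homogeneous form. -/
private lemma pair_ineq {a b : ℝ} (ha : 0 ≤ a) (hb : 0 ≤ b) :
    4*Real.log 2*(a*b/(a+b)) ≤ a*Real.log ((a+b)/a) + b*Real.log ((a+b)/b) := by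
  rcases eq_or_lt_of_le ha with h | ha0
  · simp [← h]
  rcases eq_or_lt_of_le hb with h | hb0
  · rw [← h]
    simp
  have hs : 0 < a + b := by linarith
  have hx1 : -1 ≤ (b-a)/(a+b) := by
    rw [le_div_iff₀ hs]; linarith
  have hx2 : (b-a)/(a+b) ≤ 1 := by
    rw [div_le_one hs]; linarith
  have hcore := core hx1 hx2
  have e1 : 1 + (b-a)/(a+b) = 2*b/(a+b) := by field_simp; ring
  have e2 : 1 - (b-a)/(a+b) = 2*a/(a+b) := by field_simp; ring
  rw [e1, e2] at hcore
  have l1 : Real.log (2*b/(a+b)) = Real.log 2 + Real.log b - Real.log (a+b) := by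
    rw [Real.log_div (by positivity) hs.ne', Real.log_mul two_ne_zero hb0.ne']
  have l2 : Real.log (2*a/(a+b)) = Real.log 2 + Real.log a - Real.log (a+b) := by
    rw [Real.log_div (by positivity) hs.ne', Real.log_mul two_ne_zero ha0.ne']
  have l3 : Real.log ((a+b)/a) = Real.log (a+b) - Real.log a := Real.log_div hs.ne' ha0.ne'
  have l4 : Real.log ((a+b)/b) = Real.log (a+b) - Real.log b := Real.log_div hs.ne' hb0.ne'
  rw [l1, l2] at hcore
  rw [l3, l4]
  have hcore' := mul_le_mul_of_nonneg_left hcore hs.le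
  rw [show 4*Real.log 2*(a*b/(a+b)) = (4*Real.log 2*(a*b))/(a+b) from by ring, div_le_iff₀ hs]
  have e3 : (a+b) * (2*b/(a+b) * (Real.log 2 + Real.log b - Real.log (a+b)) + 2*a/(a+b) * (Real.log 2 + Real.log a - Real.log (a+b))) = 2*b*(Real.log 2 + Real.log b - Real.log (a+b)) + 2*a*(Real.log 2 + Real.log a - Real.log (a+b)) := by
    field_simp
  have e4 : (a+b) * (2*Real.log 2 * ((b-a)/(a+b))^2) = 2*Real.log 2*(b-a)^2/(a+b) := by
    field_simp
  rw [e3, e4] at hcore'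
  have hcore'' := mul_le_mul_of_nonneg_right hcore' hs.le
  rw [div_mul_cancel₀ _ hs.ne'] at hcore''
  nlinarith [hcore'']

open Finset in
private lemma B1 {X : Type*} [Fintype X] [DecidableEq X] (w : X → ℝ) (hw : ∀ x, 0 ≤ w x)
    (hq : 2 ≤ Fintype.card X) :
    ∑ x, ∑ x' ∈ univ.filter (· ≠ x), w x * Real.log ((w x + w x') / w x)
      ≤ ((Fintype.card X : ℝ) - 1) * ∑ x, w x * Real.log ((∑ x', w x') / w x) := by
  rw [Finset.mul_sum]
  apply Finset.sum_le_sum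
  intro x _
  have hcard : ((univ.filter (· ≠ x)).card : ℝ) = (Fintype.card X : ℝ) - 1 := by
    rw [Finset.filter_ne', Finset.card_erase_of_mem (mem_univ x), Finset.card_univ,
      Nat.cast_sub (by omega)]
    simp
  calc ∑ x' ∈ univ.filter (· ≠ x), w x * Real.log ((w x + w x') / w x)
      ≤ ∑ x' ∈ univ.filter (· ≠ x), w x * Real.log ((∑ x'', w x'') / w x) := by
        apply Finset.sum_le_sum
        intro x' hx'
        simp only [Finset.mem_filter] at hx'
        by_cases h : w x = 0
        · simp [h]
        have hwx : 0 < w x := lt_of_le_of_ne (hw x) (Ne.symm h)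
        apply mul_le_mul_of_nonneg_left _ (hw x)
        apply Real.log_le_log (div_pos (by linarith [hw x']) hwx)
        have hsub : ({x, x'} : Finset X) ⊆ univ := subset_univ _
        have hb := Finset.sum_le_sum_of_subset_of_nonneg hsub (fun i _ _ => hw i)
        rw [Finset.sum_pair hx'.2.symm] at hb
        gcongr
    _ = ((Fintype.card X : ℝ) - 1) * (w x * Real.log ((∑ x', w x') / w x)) := by
        rw [Finset.sum_const, nsmul_eq_mul, hcard]

open Finset in
private lemma sum_swap_ne {X : Type*} [Fintype X] [DecidableEq X] (h : X → X → ℝ) :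
    ∑ x, ∑ x' ∈ univ.filter (· ≠ x), h x x' = ∑ x, ∑ x' ∈ univ.filter (· ≠ x), h x' x := by
  rw [Finset.sum_comm' (s' := fun x' => univ.filter (· ≠ x')) (t' := univ)]
  · intro x y
    simp only [Finset.mem_filter, Finset.mem_univ, true_and, and_true]
    exact ne_comm

open Finset in
private lemma B2 {X : Type*} [Fintype X] [DecidableEq X] (w : X → ℝ) (hw : ∀ x, 0 ≤ w x) :
    2*Real.log 2 * ∑ x, ∑ x' ∈ univ.filter (· ≠ x), (w x * w x')/(w x + w x')
      ≤ ∑ x, ∑ x' ∈ univ.filter (· ≠ x), w x * Real.log ((w x + w x') / w x) := by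
  have hswap := sum_swap_ne (fun x x' => w x * Real.log ((w x + w x') / w x))
  have hpair : ∑ x, ∑ x' ∈ univ.filter (· ≠ x), (4*Real.log 2*((w x * w x')/(w x + w x')))
      ≤ ∑ x, ∑ x' ∈ univ.filter (· ≠ x),
        (w x * Real.log ((w x + w x') / w x) + w x' * Real.log ((w x + w x') / w x')) := by
    apply Finset.sum_le_sum; intro x _
    apply Finset.sum_le_sum; intro x' _
    exact pair_ineq (hw x) (hw x')
  have e1 : ∑ x, ∑ x' ∈ univ.filter (· ≠ x), (4*Real.log 2*((w x * w x')/(w x + w x')))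
      = 4*Real.log 2 * ∑ x, ∑ x' ∈ univ.filter (· ≠ x), (w x * w x')/(w x + w x') := by
    simp_rw [Finset.mul_sum]
  have e2 : ∑ x, ∑ x' ∈ univ.filter (· ≠ x),
        (w x * Real.log ((w x + w x') / w x) + w x' * Real.log ((w x + w x') / w x'))
      = (∑ x, ∑ x' ∈ univ.filter (· ≠ x), w x * Real.log ((w x + w x') / w x))
        + ∑ x, ∑ x' ∈ univ.filter (· ≠ x), w x' * Real.log ((w x + w x') / w x') := by
    simp_rw [Finset.sum_add_distrib]
  have e3 : ∑ x, ∑ x' ∈ univ.filter (· ≠ x), w x' * Real.log ((w x + w x') / w x')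
      = ∑ x, ∑ x' ∈ univ.filter (· ≠ x), w x * Real.log ((w x + w x') / w x) := by
    calc ∑ x, ∑ x' ∈ univ.filter (· ≠ x), w x' * Real.log ((w x + w x') / w x')
        = ∑ x, ∑ x' ∈ univ.filter (· ≠ x), w x' * Real.log ((w x' + w x) / w x') := by
          apply Finset.sum_congr rfl; intro x _
          apply Finset.sum_congr rfl; intro x' _
          rw [add_comm (w x') (w x)]
      _ = ∑ x, ∑ x' ∈ univ.filter (· ≠ x), w x * Real.log ((w x + w x') / w x) := hswap.symm
  rw [e1, e2, e3] at hpair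
  linarith

open Finset in
private lemma sum_triple {X Y : Type*} [Fintype X] [Fintype Y] [DecidableEq X] (h : X → X → Y → ℝ) :
    ∑ p ∈ (((Finset.univ ×ˢ Finset.univ).filter fun p : X × X => p.2 ≠ p.1) ×ˢ (Finset.univ : Finset Y)),
        h p.1.1 p.1.2 p.2
      = ∑ x, ∑ x' ∈ Finset.univ.filter (· ≠ x), ∑ y, h x x' y := by
  rw [Finset.sum_product]
  rw [Finset.sum_filter, Finset.sum_product]
  apply Finset.sum_congr rfl; intro x _
  rw [Finset.sum_filter]

open Finset in
private lemma CSjoint {X Y : Type*} [Fintype X] [Fintype Y] [DecidableEq X] (W : X → Y → ℝ)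
    (hnn : ∀ x y, 0 ≤ W x y) (hsum : ∀ x, ∑ y, W x y = 1) (hq : 2 ≤ Fintype.card X) :
    (∑ x, ∑ x' ∈ Finset.univ.filter (· ≠ x), ∑ y, Real.sqrt (W x y * W x' y))^2
      ≤ (∑ x, ∑ x' ∈ Finset.univ.filter (· ≠ x), ∑ y, (W x y * W x' y)/(W x y + W x' y))
        * (2*((Fintype.card X : ℝ)*((Fintype.card X : ℝ)-1))) := by
  classical
  set s := (((Finset.univ ×ˢ Finset.univ).filter fun p : X × X => p.2 ≠ p.1)
    ×ˢ (Finset.univ : Finset Y)) with hs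
  set f : (X × X) × Y → ℝ :=
    fun p => Real.sqrt ((W p.1.1 p.2 * W p.1.2 p.2)/(W p.1.1 p.2 + W p.1.2 p.2)) with hf
  set g : (X × X) × Y → ℝ := fun p => Real.sqrt (W p.1.1 p.2 + W p.1.2 p.2) with hg
  have hCS := Finset.sum_mul_sq_le_sq_mul_sq s f g
  have e1 : ∑ p ∈ s, f p * g p
      = ∑ x, ∑ x' ∈ Finset.univ.filter (· ≠ x), ∑ y, Real.sqrt (W x y * W x' y) := by
    rw [← sum_triple (fun x x' y => Real.sqrt (W x y * W x' y))]
    apply Finset.sum_congr rfl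
    intro p _
    simp only [hf, hg]
    have ha := hnn p.1.1 p.2
    have hb := hnn p.1.2 p.2
    rw [← Real.sqrt_mul (by positivity)]
    congr 1
    by_cases hab : W p.1.1 p.2 + W p.1.2 p.2 = 0
    · have ha0 : W p.1.1 p.2 = 0 := by linarith
      simp [ha0]
    · field_simp
  have e2 : ∑ p ∈ s, f p ^ 2
      = ∑ x, ∑ x' ∈ Finset.univ.filter (· ≠ x), ∑ y, (W x y * W x' y)/(W x y + W x' y) := by
    rw [← sum_triple (fun x x' y => (W x y * W x' y)/(W x y + W x' y))]
    apply Finset.sum_congr rfl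
    intro p _
    simp only [hf]
    rw [Real.sq_sqrt]
    have ha := hnn p.1.1 p.2
    have hb := hnn p.1.2 p.2
    positivity
  have e3 : ∑ p ∈ s, g p ^ 2 = 2*((Fintype.card X : ℝ)*((Fintype.card X : ℝ)-1)) := by
    have : ∑ p ∈ s, g p ^ 2 = ∑ x, ∑ x' ∈ Finset.univ.filter (· ≠ x), ∑ y, (W x y + W x' y) := by
      rw [← sum_triple (fun x x' y => W x y + W x' y)]
      apply Finset.sum_congr rfl
      intro p _
      simp only [hg]
      rw [Real.sq_sqrt]
      have ha := hnn p.1.1 p.2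
      have hb := hnn p.1.2 p.2
      linarith
    rw [this]
    have inner2 : ∀ x x' : X, ∑ y, (W x y + W x' y) = 2 := by
      intro x x'
      rw [Finset.sum_add_distrib, hsum, hsum]
      norm_num
    have hcard : ∀ x : X, ((Finset.univ.filter (· ≠ x)).card : ℝ)
        = (Fintype.card X : ℝ) - 1 := by
      intro x
      rw [Finset.filter_ne', Finset.card_erase_of_mem (mem_univ x), Finset.card_univ,
        Nat.cast_sub (by omega)]
      simp
    calc ∑ x, ∑ x' ∈ Finset.univ.filter (· ≠ x), ∑ y, (W x y + W x' y)
        = ∑ x : X, ∑ x' ∈ Finset.univ.filter (· ≠ x), (2:ℝ) := by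
          apply Finset.sum_congr rfl; intro x _
          apply Finset.sum_congr rfl; intro x' _
          exact inner2 x x'
      _ = ∑ x : X, ((Fintype.card X : ℝ) - 1) * 2 := by
          apply Finset.sum_congr rfl; intro x _
          rw [Finset.sum_const, nsmul_eq_mul, hcard]
      _ = 2*((Fintype.card X : ℝ)*((Fintype.card X : ℝ)-1)) := by
          rw [Finset.sum_const, nsmul_eq_mul, Finset.card_univ]
          ring
  rw [e1, e2, e3] at hCS
  exact hCS

open Finset in
private lemma stepA {X Y : Type*} [Fintype X] [Fintype Y] (W : X → Y → ℝ)
    (hnn : ∀ x y, 0 ≤ W x y) (hsum : ∀ x, ∑ y, W x y = 1) (hq : 2 ≤ Fintype.card X) :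
    symCap W = Real.log (Fintype.card X) -
      (Fintype.card X : ℝ)⁻¹ * ∑ y, ∑ x, W x y * Real.log ((∑ x', W x' y) / W x y) := by
  have hq0 : (0:ℝ) < (Fintype.card X : ℝ) := by
    have : 0 < Fintype.card X := by omega
    exact_mod_cast this
  have key : ∀ x y, (Fintype.card X : ℝ)⁻¹ * W x y *
        Real.log (W x y / ((Fintype.card X : ℝ)⁻¹ * ∑ x', W x' y))
      = (Fintype.card X : ℝ)⁻¹ * Real.log (Fintype.card X) * W x y
        - (Fintype.card X : ℝ)⁻¹ * (W x y * Real.log ((∑ x', W x' y) / W x y)) := by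
    intro x y
    by_cases h : W x y = 0
    · simp [h]
    have hW : 0 < W x y := lt_of_le_of_ne (hnn x y) (Ne.symm h)
    have hσ : 0 < ∑ x', W x' y :=
      lt_of_lt_of_le hW (Finset.single_le_sum (fun i _ => hnn i y) (mem_univ x))
    rw [Real.log_div hW.ne' (by positivity), Real.log_div hσ.ne' hW.ne',
      Real.log_mul (inv_ne_zero hq0.ne') hσ.ne', Real.log_inv]
    ring
  calc symCap W
      = ∑ x, ∑ y, ((Fintype.card X : ℝ)⁻¹ * Real.log (Fintype.card X) * W x y
        - (Fintype.card X : ℝ)⁻¹ * (W x y * Real.log ((∑ x', W x' y) / W x y))) := by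
        unfold symCap
        exact Finset.sum_congr rfl fun x _ => Finset.sum_congr rfl fun y _ => key x y
    _ = (∑ x, ∑ y, (Fintype.card X : ℝ)⁻¹ * Real.log (Fintype.card X) * W x y)
        - ∑ x, ∑ y, (Fintype.card X : ℝ)⁻¹ * (W x y * Real.log ((∑ x', W x' y) / W x y)) := by
        simp only [Finset.sum_sub_distrib]
    _ = Real.log (Fintype.card X) -
        (Fintype.card X : ℝ)⁻¹ * ∑ y, ∑ x, W x y * Real.log ((∑ x', W x' y) / W x y) := by
        congr 1
        · have : ∀ x : X, ∑ y, (Fintype.card X : ℝ)⁻¹ * Real.log (Fintype.card X) * W x y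
              = (Fintype.card X : ℝ)⁻¹ * Real.log (Fintype.card X) := by
            intro x
            rw [← Finset.mul_sum, hsum, mul_one]
          rw [Finset.sum_congr rfl fun x _ => this x, Finset.sum_const, nsmul_eq_mul,
            Finset.card_univ]
          field_simp
        · simp only [← Finset.mul_sum]
          rw [Finset.sum_comm]


end Aux

/-- `I(W) ≤ log(q/2) + (log 2) √(1 - Z(W)²)`. -/
theorem symCap_le_log_half_q_add {X Y : Type*} [Fintype X] [Fintype Y] [DecidableEq X]
    (W : X → Y → ℝ) (hq : 2 ≤ Fintype.card X)
    (hnn : ∀ x y, 0 ≤ W x y) (hsum : ∀ x, ∑ y, W x y = 1) :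
    symCap W ≤ Real.log ((Fintype.card X : ℝ) / 2) +
      Real.log 2 * Real.sqrt (1 - Zavg W ^ 2) := by
  set q : ℝ := (Fintype.card X : ℝ) with hqdef
  have hq2 : (2:ℝ) ≤ q := by rw [hqdef]; exact_mod_cast hq
  have hq0 : (0:ℝ) < q := by linarith
  have hq1 : (0:ℝ) < q - 1 := by linarith
  have hlog2 : (0:ℝ) < Real.log 2 := Real.log_pos (by norm_num)
  set R : ℝ := ∑ x, ∑ x' ∈ Finset.univ.filter (· ≠ x), ∑ y, Real.sqrt (W x y * W x' y) with hR
  set G : ℝ := ∑ x, ∑ x' ∈ Finset.univ.filter (· ≠ x), ∑ y,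
    (W x y * W x' y)/(W x y + W x' y) with hG
  set SH : ℝ := ∑ y, ∑ x, W x y * Real.log ((∑ x', W x' y) / W x y) with hSH
  have h2 : R^2 ≤ G * (2*(q*(q-1))) := CSjoint W hnn hsum hq
  -- reorder G
  have hGswap : G = ∑ y, ∑ x, ∑ x' ∈ Finset.univ.filter (· ≠ x),
      (W x y * W x' y)/(W x y + W x' y) := by
    rw [hG]
    rw [show (∑ x, ∑ x' ∈ Finset.univ.filter (· ≠ x), ∑ y,
        (W x y * W x' y)/(W x y + W x' y))
      = ∑ x, ∑ y, ∑ x' ∈ Finset.univ.filter (· ≠ x),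
        (W x y * W x' y)/(W x y + W x' y) from
      Finset.sum_congr rfl fun x _ => Finset.sum_comm]
    exact Finset.sum_comm
  have h1 : 2*Real.log 2 * G ≤ (q-1) * SH := by
    rw [hGswap, hSH]
    have hy : ∀ y : Y, 2*Real.log 2 * ∑ x, ∑ x' ∈ Finset.univ.filter (· ≠ x),
        (W x y * W x' y)/(W x y + W x' y)
        ≤ (q-1) * ∑ x, W x y * Real.log ((∑ x', W x' y) / W x y) := by
      intro y
      exact le_trans (B2 (fun x => W x y) (fun x => hnn x y))
        (B1 (fun x => W x y) (fun x => hnn x y) hq)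
    calc 2*Real.log 2 * ∑ y, ∑ x, ∑ x' ∈ Finset.univ.filter (· ≠ x),
          (W x y * W x' y)/(W x y + W x' y)
        = ∑ y, 2*Real.log 2 * ∑ x, ∑ x' ∈ Finset.univ.filter (· ≠ x),
          (W x y * W x' y)/(W x y + W x' y) := by rw [Finset.mul_sum]
      _ ≤ ∑ y, (q-1) * ∑ x, W x y * Real.log ((∑ x', W x' y) / W x y) :=
          Finset.sum_le_sum fun y _ => hy y
      _ = (q-1) * ∑ y, ∑ x, W x y * Real.log ((∑ x', W x' y) / W x y) := by
          rw [Finset.mul_sum]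
  have h3 : Real.log 2 * R^2 ≤ q*(q-1)^2*SH := by
    have hA := mul_le_mul_of_nonneg_left h2 hlog2.le
    have hB := mul_le_mul_of_nonneg_left h1 (mul_nonneg hq0.le hq1.le)
    nlinarith [hA, hB]
  have hZ : Zavg W = (q*(q-1))⁻¹ * R := rfl
  have hmid : symCap W ≤ Real.log q - Real.log 2 * (Zavg W)^2 := by
    rw [stepA W hnn hsum hq, ← hSH, ← hqdef]
    have hpos : (0:ℝ) < (q*(q-1))^2 := by positivity
    have h4 : Real.log 2 * R^2 / (q*(q-1))^2 ≤ q*(q-1)^2*SH / (q*(q-1))^2 := by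
      gcongr
    have e5 : Real.log 2 * R^2 / (q*(q-1))^2 = Real.log 2 * ((q*(q-1))⁻¹ * R)^2 := by
      rw [mul_pow ((q*(q-1))⁻¹) R 2, inv_pow]
      ring
    have e6 : q*(q-1)^2*SH / (q*(q-1))^2 = q⁻¹ * SH := by
      field_simp
    rw [e5, e6] at h4
    rw [hZ]
    linarith
  have hsqrt : 1 - (Zavg W)^2 ≤ Real.sqrt (1 - (Zavg W)^2) := by
    set t : ℝ := 1 - (Zavg W)^2 with ht
    rcases le_or_gt t 0 with h | h
    · exact le_trans h (Real.sqrt_nonneg t)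
    · have h5 : t ≤ 1 := by nlinarith [sq_nonneg (Zavg W)]
      nlinarith [Real.sq_sqrt h.le, Real.sqrt_nonneg t]
  have hlogq : Real.log q = Real.log (q/2) + Real.log 2 := by
    rw [Real.log_div hq0.ne' two_ne_zero]
    ring
  calc symCap W ≤ Real.log q - Real.log 2 * (Zavg W)^2 := hmid
    _ = Real.log (q/2) + Real.log 2 * (1 - (Zavg W)^2) := by rw [hlogq]; ring
    _ ≤ Real.log (q/2) + Real.log 2 * Real.sqrt (1 - (Zavg W)^2) := by
        have := mul_le_mul_of_nonneg_left hsqrt hlog2.le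
        linarith
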